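/- Let a < b and let f : [a, b] → ℝ be continuous and strictly increasing. For each n ≥ 1 define, with x_i^{(n)} = a + i(b−a)/n, y_i^{(n)} = f(x_i^{(n)}), c = f(a), d = f(b), hat functions A_i^{(n)} and B_i^{(n)}, R_n(x, y) = max_{0≤i≤n} A_i^{(n)}(x)·B_i^{(n)}(y), and E_n(x) = (∫_c^d y·R_n(x, y) dy)/(∫_c^d R_n(x, y) dy). Then the sequence (E_n) converges uniformly to f on [a, b]: for every ε > 0 there exists N such that for all n > N and all x ∈ [a, b], |E_n(x) − f(x)| < ε. -/

import Mathlib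

open scoped Classical

/-- The equidistant node `x_i^{(n)} = a + i (b-a)/n` of `[a, b]`. -/
noncomputable def nodes (a b : ℝ) (n i : ℕ) : ℝ := a + (i : ℝ) * (b - a) / (n : ℝ)

/-- The triangular hat function `A_i^{(n)}(x) = max (0, 1 - (n/(b-a)) |x - x_i^{(n)}|)`. -/
noncomputable def hatA (a b : ℝ) (n i : ℕ) (x : ℝ) : ℝ :=
  max 0 (1 - ((n : ℝ) / (b - a)) * |x - nodes a b n i|)

/-- The hat function `B_i^{(n)}` at the strictly increasing nodes `y 0 < y 1 < … < y n`:
it rises linearly from `y (i-1)` to `y i`, falls linearly from `y i` to `y (i+1)`, and is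
`0` otherwise; for `i = 0` only the falling piece is present and for `i = n` only the
rising piece is present. -/
noncomputable def hatB (n : ℕ) (y : ℕ → ℝ) (i : ℕ) (t : ℝ) : ℝ :=
  if i ≠ 0 ∧ y (i - 1) ≤ t ∧ t ≤ y i then (t - y (i - 1)) / (y i - y (i - 1))
  else if i ≠ n ∧ y i ≤ t ∧ t ≤ y (i + 1) then (y (i + 1) - t) / (y (i + 1) - y i)
  else 0

/-- The joint membership function `R_n(x, t) = max_{0 ≤ i ≤ n} A_i^{(n)}(x) B_i^{(n)}(t)`. -/
noncomputable def Rfun (a b : ℝ) (n : ℕ) (y : ℕ → ℝ) (x t : ℝ) : ℝ :=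
  (Finset.range (n + 1)).sup' Finset.nonempty_range_add_one
    (fun i => hatA a b n i x * hatB n y i t)

lemma nodes_zero (a b : ℝ) (n : ℕ) : nodes a b n 0 = a := by simp [nodes]

lemma nodes_last (a b : ℝ) {n : ℕ} (hn : n ≠ 0) : nodes a b n n = b := by
  have : (n : ℝ) ≠ 0 := Nat.cast_ne_zero.mpr hn
  rw [nodes, mul_div_cancel_left₀ _ this]; ring

lemma nodes_mono (a b : ℝ) (hab : a < b) {n : ℕ} (hn : n ≠ 0) {i k : ℕ} (hik : i ≤ k) :
    nodes a b n i ≤ nodes a b n k := by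
  have hn' : (0:ℝ) < (n:ℝ) := by exact_mod_cast Nat.pos_of_ne_zero hn
  have h1 : (0:ℝ) < (b - a) / n := div_pos (by linarith) hn'
  unfold nodes
  have : (i:ℝ) ≤ (k:ℝ) := by exact_mod_cast hik
  rw [mul_div_assoc, mul_div_assoc]
  nlinarith

lemma nodes_mem (a b : ℝ) (hab : a < b) {n i : ℕ} (hn : n ≠ 0) (hi : i ≤ n) :
    nodes a b n i ∈ Set.Icc a b := by
  constructor
  · simpa [nodes_zero] using nodes_mono a b hab hn (Nat.zero_le i)
  · simpa [nodes_last a b hn] using nodes_mono a b hab hn hi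

lemma nodes_sub (a b : ℝ) (n : ℕ) (i k : ℕ) :
    nodes a b n k - nodes a b n i = ((k:ℝ) - (i:ℝ)) * (b - a) / n := by
  unfold nodes; ring

lemma hatA_nonneg (a b : ℝ) (n i : ℕ) (x : ℝ) : 0 ≤ hatA a b n i x := le_max_left _ _

lemma hatA_le_one (a b : ℝ) (hab : a < b) (n i : ℕ) (x : ℝ) : hatA a b n i x ≤ 1 := by
  apply max_le (by norm_num)
  have hba : (0:ℝ) < b - a := by linarith
  have : 0 ≤ ((n : ℝ) / (b - a)) * |x - nodes a b n i| := by positivity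
  linarith

lemma hatA_eq_zero (a b : ℝ) (hab : a < b) {n : ℕ} (hn : n ≠ 0) (i : ℕ) (x : ℝ)
    (h : (b - a) / n ≤ |x - nodes a b n i|) : hatA a b n i x = 0 := by
  have hn' : (0:ℝ) < (n:ℝ) := by exact_mod_cast Nat.pos_of_ne_zero hn
  have hba : (0:ℝ) < b - a := by linarith
  have h1 : (1:ℝ) ≤ ((n : ℝ) / (b - a)) * |x - nodes a b n i| := by
    have := mul_le_mul_of_nonneg_left h (le_of_lt (div_pos hn' hba))
    calc (1:ℝ) = (n / (b-a)) * ((b-a)/n) := by field_simp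
    _ ≤ _ := this
  exact max_eq_left (by linarith)

lemma hatA_ge_half (a b : ℝ) (hab : a < b) {n : ℕ} (hn : n ≠ 0) (i : ℕ) (x : ℝ)
    (h : |x - nodes a b n i| ≤ (b - a) / (2 * n)) : 1/2 ≤ hatA a b n i x := by
  have hn' : (0:ℝ) < (n:ℝ) := by exact_mod_cast Nat.pos_of_ne_zero hn
  have hba : (0:ℝ) < b - a := by linarith
  have h1 : ((n : ℝ) / (b - a)) * |x - nodes a b n i| ≤ 1/2 := by
    have := mul_le_mul_of_nonneg_left h (le_of_lt (div_pos hn' hba))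
    calc ((n : ℝ) / (b - a)) * |x - nodes a b n i| ≤ (n/(b-a)) * ((b-a)/(2*n)) := this
    _ = 1/2 := by field_simp
  exact le_trans (by linarith) (le_max_right _ _)

section hatBlem
variable {n : ℕ} {y : ℕ → ℝ}

lemma hatB_nonneg (hY : ∀ i k : ℕ, i < k → k ≤ n → y i < y k) {i : ℕ} (hi : i ≤ n) (t : ℝ) :
    0 ≤ hatB n y i t := by
  unfold hatB
  split_ifs with h1 h2
  · obtain ⟨h0, ha, hb⟩ := h1
    have hlt : y (i-1) < y i := hY (i-1) i (Nat.sub_lt (Nat.pos_of_ne_zero h0) one_pos) hi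
    exact div_nonneg (by linarith) (by linarith)
  · obtain ⟨h0, ha, hb⟩ := h2
    have hlt : y i < y (i+1) := hY i (i+1) (Nat.lt_succ_self i) (Nat.succ_le_of_lt (lt_of_le_of_ne hi h0))
    exact div_nonneg (by linarith) (by linarith)
  · exact le_refl 0

lemma hatB_le_one (hY : ∀ i k : ℕ, i < k → k ≤ n → y i < y k) {i : ℕ} (hi : i ≤ n) (t : ℝ) :
    hatB n y i t ≤ 1 := by
  unfold hatB
  split_ifs with h1 h2
  · obtain ⟨h0, ha, hb⟩ := h1
    have hlt : y (i-1) < y i := hY (i-1) i (Nat.sub_lt (Nat.pos_of_ne_zero h0) one_pos) hi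
    rw [div_le_one (by linarith)]; linarith
  · obtain ⟨h0, ha, hb⟩ := h2
    have hlt : y i < y (i+1) := hY i (i+1) (Nat.lt_succ_self i) (Nat.succ_le_of_lt (lt_of_le_of_ne hi h0))
    rw [div_le_one (by linarith)]; linarith
  · norm_num

lemma hatB_support {i : ℕ} {t : ℝ} (h : hatB n y i t ≠ 0) :
    (i ≠ 0 ∧ y (i - 1) ≤ t ∧ t ≤ y i) ∨ (i ≠ n ∧ y i ≤ t ∧ t ≤ y (i + 1)) := by
  unfold hatB at h
  split_ifs at h with h1 h2
  · exact Or.inl h1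
  · exact Or.inr h2
  · exact absurd rfl h

lemma hatB_measurable (n : ℕ) (y : ℕ → ℝ) (i : ℕ) : Measurable (hatB n y i) := by
  unfold hatB
  apply Measurable.ite
  · by_cases h0 : i = 0
    · simp [h0]
    · have : {t : ℝ | i ≠ 0 ∧ y (i-1) ≤ t ∧ t ≤ y i} = Set.Icc (y (i-1)) (y i) := by
        ext t; simp [h0, Set.mem_Icc]
      rw [this]; exact measurableSet_Icc
  · fun_prop
  · apply Measurable.ite
    · by_cases h0 : i = n
      · simp [h0]
      · have : {t : ℝ | i ≠ n ∧ y i ≤ t ∧ t ≤ y (i+1)} = Set.Icc (y i) (y (i+1)) := by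
          ext t; simp [h0, Set.mem_Icc]
        rw [this]; exact measurableSet_Icc
    · fun_prop
    · fun_prop

end hatBlem

section hatBlow
variable {n : ℕ} {y : ℕ → ℝ}

lemma hatB_half_up (hY : ∀ i k : ℕ, i < k → k ≤ n → y i < y k) {i : ℕ} (h0 : i ≠ 0)
    (hi : i ≤ n) {t : ℝ} (h1 : (y (i-1) + y i)/2 ≤ t) (h2 : t ≤ y i) :
    1/2 ≤ hatB n y i t := by
  have hlt : y (i-1) < y i := hY (i-1) i (Nat.sub_lt (Nat.pos_of_ne_zero h0) one_pos) hi
  unfold hatB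
  rw [if_pos ⟨h0, by linarith, h2⟩, le_div_iff₀ (by linarith)]
  linarith

lemma hatB_half_down (hY : ∀ i k : ℕ, i < k → k ≤ n → y i < y k) (hn : n ≠ 0)
    {t : ℝ} (h1 : y 0 ≤ t) (h2 : t ≤ (y 0 + y 1)/2) :
    1/2 ≤ hatB n y 0 t := by
  have hlt : y 0 < y 1 := hY 0 1 one_pos (Nat.one_le_iff_ne_zero.mpr hn)
  unfold hatB
  rw [if_neg (by simp), if_pos ⟨Ne.symm hn, h1, by linarith⟩, le_div_iff₀ (by linarith)]
  linarith

end hatBlow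

section Rlem
variable {a b : ℝ} {n : ℕ} {y : ℕ → ℝ} {x : ℝ}

lemma Rfun_ge (i : ℕ) (hi : i < n + 1) (t : ℝ) :
    hatA a b n i x * hatB n y i t ≤ Rfun a b n y x t := by
  unfold Rfun
  exact Finset.le_sup' (fun i => hatA a b n i x * hatB n y i t) (Finset.mem_range.mpr hi)

lemma Rfun_nonneg (hab : a < b) (hY : ∀ i k : ℕ, i < k → k ≤ n → y i < y k) (t : ℝ) :
    0 ≤ Rfun a b n y x t := by
  refine le_trans ?_ (Rfun_ge 0 (Nat.succ_pos n) t)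
  exact mul_nonneg (hatA_nonneg a b n 0 x) (hatB_nonneg hY (Nat.zero_le n) t)

lemma Rfun_le_one (hab : a < b) (hY : ∀ i k : ℕ, i < k → k ≤ n → y i < y k) (t : ℝ) :
    Rfun a b n y x t ≤ 1 := by
  apply Finset.sup'_le
  intro i hi
  have hin : i ≤ n := Nat.lt_succ_iff.mp (Finset.mem_range.mp hi)
  exact mul_le_one₀ (hatA_le_one a b hab n i x) (hatB_nonneg hY hin t) (hatB_le_one hY hin t)

lemma Rfun_measurable : Measurable (fun t => Rfun a b n y x t) := by
  unfold Rfun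
  have heq : (fun t => (Finset.range (n+1)).sup' Finset.nonempty_range_add_one
      (fun i => hatA a b n i x * hatB n y i t)) =
      (Finset.range (n+1)).sup' Finset.nonempty_range_add_one
      (fun i t => hatA a b n i x * hatB n y i t) := by
    ext t
    rw [Finset.sup'_apply]
  rw [heq]
  exact Finset.measurable_sup' Finset.nonempty_range_add_one
    (fun i _ => measurable_const.mul (hatB_measurable n y i))

lemma Rfun_exists (t : ℝ) : ∃ i ≤ n,
    Rfun a b n y x t = hatA a b n i x * hatB n y i t := by
  obtain ⟨i, hi, hEq⟩ := Finset.exists_mem_eq_sup' (Finset.nonempty_range_add_one (n := n))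
    (fun i => hatA a b n i x * hatB n y i t)
  exact ⟨i, Nat.lt_succ_iff.mp (Finset.mem_range.mp hi), hEq⟩

end Rlem

lemma bounded_II {c d C : ℝ} {g : ℝ → ℝ} (hg : Measurable g)
    (hb : ∀ t ∈ Set.uIoc c d, |g t| ≤ C) : IntervalIntegrable g MeasureTheory.volume c d := by
  rw [intervalIntegrable_iff]
  apply MeasureTheory.Measure.integrableOn_of_bounded (measure_Ioc_lt_top).ne
    hg.aestronglyMeasurable
  rw [MeasureTheory.ae_restrict_iff' measurableSet_Ioc]
  exact MeasureTheory.ae_of_all _ (fun t ht => by rw [Real.norm_eq_abs]; exact hb t ht)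

lemma nodes_strict (a b : ℝ) (hab : a < b) {n : ℕ} (hn : n ≠ 0) {i k : ℕ} (hik : i < k) :
    nodes a b n i < nodes a b n k := by
  have hn' : (0:ℝ) < (n:ℝ) := by exact_mod_cast Nat.pos_of_ne_zero hn
  have h1 : (0:ℝ) < (b - a) / n := div_pos (by linarith) hn'
  unfold nodes
  have : (i:ℝ) < (k:ℝ) := by exact_mod_cast hik
  rw [mul_div_assoc, mul_div_assoc]
  nlinarith


set_option maxHeartbeats 1000000 in
/-- Theorem 2.1 of the paper, strictly monotone case. For continuous
strictly increasing `f` on `[a, b]`, the conditional mathematical expectations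
`E_n(x) = (∫_c^d t R_n(x,t) dt)/(∫_c^d R_n(x,t) dt)` converge uniformly to `f` on `[a, b]`. -/
theorem stmt_5 (a b : ℝ) (hab : a < b) (f : ℝ → ℝ)
    (hf : ContinuousOn f (Set.Icc a b)) (hmono : StrictMonoOn f (Set.Icc a b)) :
    ∀ ε > 0, ∃ N : ℕ, ∀ n > N, ∀ x ∈ Set.Icc a b,
      |(∫ t in f a..f b, t * Rfun a b n (fun i => f (nodes a b n i)) x t) /
          (∫ t in f a..f b, Rfun a b n (fun i => f (nodes a b n i)) x t) - f x| < ε := by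
  intro ε hε
  have hUC : UniformContinuousOn f (Set.Icc a b) :=
    isCompact_Icc.uniformContinuousOn_of_continuous hf
  rw [Metric.uniformContinuousOn_iff] at hUC
  obtain ⟨δ, hδ, hδf⟩ := hUC ε hε
  obtain ⟨N, hN⟩ := exists_nat_gt (3 * (b - a) / δ)
  refine ⟨N, fun n hn x hx => ?_⟩
  have hn0 : n ≠ 0 := by omega
  have hn' : (0:ℝ) < (n:ℝ) := by exact_mod_cast Nat.pos_of_ne_zero hn0
  have hba : (0:ℝ) < b - a := by linarith
  set Y : ℕ → ℝ := fun i => f (nodes a b n i) with hYdef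
  set X : ℕ → ℝ := fun i => nodes a b n i with hXdef
  have hXapp : ∀ i, nodes a b n i = X i := fun _ => rfl
  have hXmem : ∀ {i : ℕ}, i ≤ n → X i ∈ Set.Icc a b := fun hi => nodes_mem a b hab hn0 hi
  have hY : ∀ i k : ℕ, i < k → k ≤ n → Y i < Y k := fun i k hik hkn =>
    hmono (hXmem (le_trans hik.le hkn)) (hXmem hkn) (nodes_strict a b hab hn0 hik)
  have hYle : ∀ i k : ℕ, i ≤ k → k ≤ n → Y i ≤ Y k := by
    intro i k hik hkn
    rcases eq_or_lt_of_le hik with h | h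
    · rw [h]
    · exact (hY i k h hkn).le
  have hXzero : X 0 = a := nodes_zero a b n
  have hXlast : X n = b := nodes_last a b hn0
  have hc : Y 0 = f a := by rw [hYdef]; simp [nodes_zero]
  have hd : Y n = f b := by rw [hYdef]; simp [nodes_last a b hn0]
  have hcd : f a < f b := by
    rw [← hc, ← hd]; exact hY 0 n (Nat.pos_of_ne_zero hn0) le_rfl
  -- the index j with X j ≤ x ≤ X (j+1)
  set s : ℝ := (x - a) * n / (b - a) with hsdef
  have hs0 : 0 ≤ s := by
    apply div_nonneg _ hba.le
    have := hx.1
    nlinarith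
  have hsn : s ≤ n := by
    rw [hsdef, div_le_iff₀ hba]
    have := hx.2
    nlinarith
  set j : ℕ := min (n - 1) ⌊s⌋₊ with hjdef
  have hjn : j + 1 ≤ n := by
    have := min_le_left (n - 1) ⌊s⌋₊
    omega
  have hxe : a + s * (b - a) / n = x := by
    rw [hsdef]
    field_simp
    ring
  have hxl : X j ≤ x := by
    have h1 : (j:ℝ) ≤ s := by
      calc (j:ℝ) ≤ (⌊s⌋₊ : ℝ) := by exact_mod_cast min_le_right (n-1) ⌊s⌋₊
      _ ≤ s := Nat.floor_le hs0
    have : (j:ℝ) * (b - a) / n ≤ s * (b - a) / n := by gcongr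
    rw [hXdef]; unfold nodes; linarith
  have hxu : x ≤ X (j + 1) := by
    have h1 : s ≤ (j:ℝ) + 1 := by
      by_cases hcase : ⌊s⌋₊ ≤ n - 1
      · have hje : j = ⌊s⌋₊ := min_eq_right hcase
        have := Nat.lt_floor_add_one s
        rw [hje]; push_cast; linarith
      · have hje : j = n - 1 := min_eq_left (by omega)
        have : (j:ℝ) + 1 = (n:ℝ) := by
          have : j + 1 = n := by omega
          exact_mod_cast congrArg (Nat.cast : ℕ → ℝ) this
        linarith
    have h2 : s * (b - a) / n ≤ ((j:ℝ) + 1) * (b - a) / n := by gcongr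
    rw [hXdef]; unfold nodes; push_cast; linarith
  -- support bounds
  set L : ℝ := Y (j - 1) with hLdef
  set U : ℝ := Y (min (j + 2) n) with hUdef
  have hjmin : j ≤ min (j + 2) n := le_min (by omega) (by omega)
  have hj1min : j + 1 ≤ min (j + 2) n := le_min (by omega) (by omega)
  have hminn : min (j + 2) n ≤ n := min_le_right _ _
  have hLU : ∀ t : ℝ, Rfun a b n Y x t ≠ 0 → L ≤ t ∧ t ≤ U := by
    intro t ht
    obtain ⟨i, hi, hEq⟩ := Rfun_exists (a := a) (b := b) (n := n) (y := Y) (x := x) t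
    rw [hEq] at ht
    have hA : hatA a b n i x ≠ 0 := left_ne_zero_of_mul ht
    have hB : hatB n Y i t ≠ 0 := right_ne_zero_of_mul ht
    have hAx : |x - X i| < (b - a) / n := by
      by_contra h'
      exact hA (hatA_eq_zero a b hab hn0 i x (le_of_not_gt h'))
    have hij : i = j ∨ i = j + 1 := by
      have habs := abs_lt.mp hAx
      have hsub1 : X i - X j = ((i:ℝ) - (j:ℝ)) * (b - a) / n := nodes_sub a b n j i
      have hsub2 : X i - X (j+1) = ((i:ℝ) - ((j:ℝ)+1)) * (b - a) / n := by
        have := nodes_sub a b n (j+1) i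
        push_cast at this ⊢
        linarith
      have hp : (0:ℝ) < (b - a) / n := div_pos hba hn'
      have hgt : (j:ℝ) - 1 < (i:ℝ) := by
        have h1 : -(((b:ℝ) - a)/n) < X i - X j := by linarith
        rw [hsub1] at h1
        rw [mul_div_assoc] at h1
        nlinarith
      have hlt2 : (i:ℝ) < (j:ℝ) + 2 := by
        have h1 : X i - X (j+1) < (b - a)/n := by linarith
        rw [hsub2, mul_div_assoc] at h1
        nlinarith
      have hge : j ≤ i := by
        have : (j:ℝ) < (i:ℝ) + 1 := by linarith
        have := (by exact_mod_cast this : j < i + 1)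
        omega
      have hle : i ≤ j + 1 := by
        have : (i:ℝ) < ((j:ℕ):ℝ) + 2 := hlt2
        have := (by exact_mod_cast this : i < j + 2)
        omega
      omega
    have hBs := hatB_support hB
    rcases hij with rfl | rfl
    · rcases hBs with ⟨h0, h1, h2⟩ | ⟨h0, h1, h2⟩
      · exact ⟨h1, le_trans h2 (hYle _ _ hjmin hminn)⟩
      · exact ⟨le_trans (hYle _ _ (Nat.sub_le j 1) (by omega)) h1,
          le_trans h2 (hYle _ _ hj1min hminn)⟩
    · rcases hBs with ⟨h0, h1, h2⟩ | ⟨h0, h1, h2⟩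
      · have : j + 1 - 1 = j := by omega
        rw [this] at h1
        exact ⟨le_trans (hYle _ _ (Nat.sub_le j 1) (by omega)) h1,
          le_trans h2 (hYle _ _ hj1min hminn)⟩
      · have hj2 : j + 2 ≤ n := by omega
        have hmeq : min (j + 2) n = j + 2 := min_eq_left hj2
        refine ⟨le_trans (hYle _ _ (by omega) (by omega)) h1, ?_⟩
        rw [hUdef, hmeq]
        exact h2
  -- positivity setup: find i0 with hatA ≥ 1/2
  have hXsub : X (j+1) - X j = (b - a) / n := by
    have := nodes_sub a b n j (j+1)
    push_cast at this
    rw [hXdef]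
    rw [this]; ring
  obtain ⟨i0, hi0n, hi0j, hAhalf⟩ :
      ∃ i0, i0 ≤ n ∧ (i0 = j ∨ i0 = j + 1) ∧ 1/2 ≤ hatA a b n i0 x := by
    by_cases hcase : x ≤ X j + (b - a)/(2*n)
    · refine ⟨j, by omega, Or.inl rfl, hatA_ge_half a b hab hn0 j x ?_⟩
      rw [abs_le, hXapp j]
      have h0' : (0:ℝ) ≤ (b-a)/(2*n) := by positivity
      exact ⟨by linarith, by linarith⟩
    · push_neg at hcase
      refine ⟨j+1, hjn, Or.inr rfl, hatA_ge_half a b hab hn0 (j+1) x ?_⟩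
      rw [abs_le, hXapp (j+1)]
      have h0' : (0:ℝ) ≤ (b-a)/(2*n) := by positivity
      have hhalf : (b-a)/n = 2 * ((b-a)/(2*n)) := by field_simp
      exact ⟨by linarith, by linarith⟩
  -- the small interval [u, v] on which Rfun ≥ 1/4
  obtain ⟨u, v, hcu, huv, hvd, hBlow⟩ :
      ∃ u v : ℝ, Y 0 ≤ u ∧ u < v ∧ v ≤ Y n ∧ ∀ t ∈ Set.Icc u v, 1/2 ≤ hatB n Y i0 t := by
    by_cases h0 : i0 = 0
    · subst h0
      refine ⟨Y 0, (Y 0 + Y 1)/2, le_rfl, ?_, ?_, ?_⟩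
      · have := hY 0 1 one_pos (by omega); linarith
      · have := hYle 1 n (by omega) le_rfl; have := hY 0 1 one_pos (by omega); linarith
      · intro t ht
        exact hatB_half_down hY hn0 ht.1 ht.2
    · refine ⟨(Y (i0 - 1) + Y i0)/2, Y i0, ?_, ?_, hYle i0 n hi0n le_rfl, ?_⟩
      · have h1 := hYle 0 (i0 - 1) (Nat.zero_le _) (by omega)
        have h2 := hY (i0 - 1) i0 (Nat.sub_lt (Nat.pos_of_ne_zero h0) one_pos) hi0n
        linarith
      · have h2 := hY (i0 - 1) i0 (Nat.sub_lt (Nat.pos_of_ne_zero h0) one_pos) hi0n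
        linarith
      · intro t ht
        exact hatB_half_up hY h0 hi0n ht.1 ht.2
  have hRlow : ∀ t ∈ Set.Icc u v, 1/4 ≤ Rfun a b n Y x t := by
    intro t ht
    refine le_trans ?_ (Rfun_ge i0 (by omega) t)
    have h1 := hBlow t ht
    nlinarith
  -- integrability
  set g : ℝ → ℝ := fun t => Rfun a b n Y x t with hgdef
  have hR0 : ∀ t, 0 ≤ g t := fun t => Rfun_nonneg hab hY t
  have hR1 : ∀ t, g t ≤ 1 := fun t => Rfun_le_one hab hY t
  have hgmeas : Measurable g := Rfun_measurable
  have hInt : IntervalIntegrable g MeasureTheory.volume (f a) (f b) :=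
    bounded_II hgmeas (fun t _ => abs_le.mpr ⟨by linarith [hR0 t], hR1 t⟩)
  have hIntT : IntervalIntegrable (fun t => t * g t) MeasureTheory.volume (f a) (f b) := by
    apply bounded_II (C := |f a| + |f b|) (measurable_id.mul hgmeas)
    intro t ht
    rw [Set.uIoc_of_le hcd.le] at ht
    have h1 : |t| ≤ |f a| + |f b| := by
      rw [abs_le]
      have := le_abs_self (f b)
      have := neg_abs_le (f a)
      have := abs_nonneg (f a)
      have := abs_nonneg (f b)
      constructor <;> [linarith [ht.1]; linarith [ht.2]]
    show |t * g t| ≤ _; rw [abs_mul]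
    calc |t| * |g t| ≤ (|f a| + |f b|) * 1 := by
          apply mul_le_mul h1 _ (abs_nonneg _) (by positivity)
          rw [abs_le]; exact ⟨by linarith [hR0 t], hR1 t⟩
    _ = |f a| + |f b| := mul_one _
  -- the integral of g is positive
  have hcu' : f a ≤ u := by rw [← hc]; exact hcu
  have hvd' : v ≤ f b := by rw [← hd]; exact hvd
  have hm1 : IntervalIntegrable g MeasureTheory.volume (f a) u := by
    apply hInt.mono_set
    rw [Set.uIcc_of_le hcd.le, Set.uIcc_of_le (by linarith)]
    exact Set.Icc_subset_Icc le_rfl (by linarith)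
  have hm2 : IntervalIntegrable g MeasureTheory.volume u v := by
    apply hInt.mono_set
    rw [Set.uIcc_of_le hcd.le, Set.uIcc_of_le huv.le]
    exact Set.Icc_subset_Icc hcu' (by linarith)
  have hm3 : IntervalIntegrable g MeasureTheory.volume v (f b) := by
    apply hInt.mono_set
    rw [Set.uIcc_of_le hcd.le, Set.uIcc_of_le hvd']
    exact Set.Icc_subset_Icc (by linarith) le_rfl
  have hsplit : (∫ t in (f a)..(f b), g t) =
      (∫ t in (f a)..u, g t) + (∫ t in u..v, g t) + (∫ t in v..(f b), g t) := by
    rw [intervalIntegral.integral_add_adjacent_intervals hm1 hm2,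
      intervalIntegral.integral_add_adjacent_intervals (hm1.trans hm2) hm3]
  have h1 : 0 ≤ ∫ t in (f a)..u, g t :=
    intervalIntegral.integral_nonneg hcu' (fun t _ => hR0 t)
  have h3 : 0 ≤ ∫ t in v..(f b), g t :=
    intervalIntegral.integral_nonneg hvd' (fun t _ => hR0 t)
  have h2 : (v - u) * (1/4) ≤ ∫ t in u..v, g t := by
    have := intervalIntegral.integral_mono_on (μ := MeasureTheory.volume)
      (f := fun _ => (1/4 : ℝ)) (g := g) huv.le intervalIntegrable_const hm2
      (fun t ht => hRlow t ht)
    simpa using this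
  have hIpos : 0 < ∫ t in (f a)..(f b), g t := by
    rw [hsplit]
    nlinarith
  set I : ℝ := ∫ t in (f a)..(f b), g t with hIdef
  set J : ℝ := ∫ t in (f a)..(f b), t * g t with hJdef
  -- mean value bounds: L * I ≤ J ≤ U * I
  have hLI : L * I ≤ J := by
    have hnn : ∀ t ∈ Set.Icc (f a) (f b), 0 ≤ (t - L) * g t := by
      intro t ht
      by_cases hg0 : g t = 0
      · simp [hg0]
      · exact mul_nonneg (by linarith [(hLU t hg0).1]) (hR0 t)
    have h4 : 0 ≤ ∫ t in (f a)..(f b), (t - L) * g t :=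
      intervalIntegral.integral_nonneg hcd.le hnn
    have heq : (fun t => (t - L) * g t) = fun t => t * g t - L * g t := by
      ext t; ring
    rw [heq, intervalIntegral.integral_sub hIntT (hInt.const_mul L),
      intervalIntegral.integral_const_mul] at h4
    linarith
  have hUI : J ≤ U * I := by
    have hnn : ∀ t ∈ Set.Icc (f a) (f b), 0 ≤ (U - t) * g t := by
      intro t ht
      by_cases hg0 : g t = 0
      · simp [hg0]
      · exact mul_nonneg (by linarith [(hLU t hg0).2]) (hR0 t)
    have h4 : 0 ≤ ∫ t in (f a)..(f b), (U - t) * g t :=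
      intervalIntegral.integral_nonneg hcd.le hnn
    have heq : (fun t => (U - t) * g t) = fun t => U * g t - t * g t := by
      ext t; ring
    rw [heq, intervalIntegral.integral_sub (hInt.const_mul U) hIntT,
      intervalIntegral.integral_const_mul] at h4
    linarith
  have hJIL : L ≤ J / I := by rw [le_div_iff₀ hIpos]; linarith
  have hJIU : J / I ≤ U := by rw [div_le_iff₀ hIpos]; linarith
  -- f x is between L and U
  have hfxL : L ≤ f x := by
    have h1 : Y j ≤ f x := hmono.monotoneOn (hXmem (by omega)) hx hxl
    exact le_trans (hYle _ _ (Nat.sub_le j 1) (by omega)) h1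
  have hfxU : f x ≤ U := by
    have h1 : f x ≤ Y (j+1) := hmono.monotoneOn hx (hXmem hjn) hxu
    exact le_trans h1 (hYle _ _ hj1min hminn)
  -- U - L < ε by uniform continuity
  have hUL : U - L < ε := by
    have hXord : X (j - 1) ≤ X (min (j + 2) n) :=
      nodes_mono a b hab hn0 (le_trans (Nat.sub_le j 1) hjmin)
    have hdist : X (min (j + 2) n) - X (j - 1) ≤ 3 * (b - a) / n := by
      have hsub := nodes_sub a b n (j - 1) (min (j + 2) n)
      rw [← hXapp (min (j+2) n), ← hXapp (j-1), hsub]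
      have hcast : ((min (j+2) n : ℕ) : ℝ) - ((j - 1 : ℕ) : ℝ) ≤ 3 := by
        have h5 : min (j+2) n ≤ j + 2 := min_le_left _ _
        have h6 : ((j:ℝ)) - 1 ≤ ((j - 1 : ℕ) : ℝ) := by
          by_cases hj0 : j = 0
          · simp [hj0]
          · rw [Nat.cast_sub (by omega)]; norm_num
        have h7 : ((min (j+2) n : ℕ) : ℝ) ≤ (j:ℝ) + 2 := by exact_mod_cast h5
        linarith
      rw [mul_div_assoc, mul_div_assoc]
      have hp : (0:ℝ) < (b-a)/n := div_pos hba hn'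
      nlinarith
    have hlt : 3 * (b - a) / n < δ := by
      have hNn : (3 * (b - a) / δ) < (n:ℝ) := by
        have : (N:ℝ) < (n:ℝ) := by exact_mod_cast hn
        linarith
      rw [div_lt_iff₀ hn']
      calc 3 * (b - a) = (3 * (b - a) / δ) * δ := by field_simp
      _ < (n:ℝ) * δ := by
          apply mul_lt_mul_of_pos_right hNn hδ
      _ = δ * n := mul_comm _ _
    have hdd : dist (X (min (j + 2) n)) (X (j - 1)) < δ := by
      rw [Real.dist_eq, abs_of_nonneg (by linarith)]
      linarith
    have := hδf _ (hXmem hminn) _ (hXmem (by omega)) hdd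
    rw [Real.dist_eq] at this
    calc U - L ≤ |Y (min (j+2) n) - Y (j-1)| := le_abs_self _
    _ < ε := this
  -- conclude
  rw [abs_sub_lt_iff]
  constructor <;> linarith
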